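/- Let p > 0, let (Ω, 𝒜, P) be a probability space, and let F : Ω → ProbabilityMeasure(ℝ/pℤ) be a measurable random probability measure on the additive circle of circumference p whose distribution is translation invariant (for every x ∈ ℝ/pℤ, the pushforward of F ω under translation by x has the same distribution as F). Then for every Borel set A ⊆ ℝ/pℤ and every t > 0, P({ω : (F ω)(A) > t}) ≤ μ(A)/(p·t), where μ is the Haar (Lebesgue) measure on ℝ/pℤ with total mass p. -/

import Mathlib

open MeasureTheory Set
open scoped ENNReal

/-- Let `p > 0` and let `F` be a measurable random probability
measure on the additive circle `ℝ/pℤ` whose distribution is translation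
invariant. Then for every Borel set `A` and every `t > 0`,
`P {ω : (F ω)(A) > t} ≤ μ(A) / (p·t)`, where `μ` is the Haar (Lebesgue)
measure of total mass `p` (Markov's inequality bound of Section 5.3). -/
theorem markov_bound_translation_invariant_random_measure
    (p : ℝ) [Fact (0 < p)]
    {Ω : Type*} [MeasurableSpace Ω] (P : Measure Ω) [IsProbabilityMeasure P]
    (F : Ω → Measure (AddCircle p))
    (hFprob : ∀ ω, IsProbabilityMeasure (F ω))
    (hFmeas : Measurable F)
    (hinv : ∀ x : AddCircle p,
      Measure.map (fun ω => Measure.map (fun y => y + x) (F ω)) P = Measure.map F P) :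
    ∀ A : Set (AddCircle p), MeasurableSet A → ∀ t : ℝ, 0 < t →
      P {ω | ENNReal.ofReal t < F ω A} ≤
        volume A / (ENNReal.ofReal p * ENNReal.ofReal t) := by
  intro A hA t ht
  have hp : (0 : ℝ) < p := Fact.out
  have hp0 : ENNReal.ofReal p ≠ 0 := by simpa [ENNReal.ofReal_eq_zero, not_le] using hp
  have ht0 : ENNReal.ofReal t ≠ 0 := by simpa [ENNReal.ofReal_eq_zero, not_le] using ht
  have hmeasA : Measurable fun ω => F ω A := (Measure.measurable_coe hA).comp hFmeas
  -- Step 1: by translation invariance, the expectation of `F ω ((·+x)⁻¹' A)`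
  -- does not depend on `x`.
  have hconst : ∀ x : AddCircle p,
      ∫⁻ ω, F ω ((fun y => y + x) ⁻¹' A) ∂P = ∫⁻ ω, F ω A ∂P := by
    intro x
    have hmap : Measurable fun ω => Measure.map (fun y => y + x) (F ω) :=
      (Measure.measurable_map _ (measurable_add_const x)).comp hFmeas
    calc ∫⁻ ω, F ω ((fun y => y + x) ⁻¹' A) ∂P
        = ∫⁻ ω, (Measure.map (fun y => y + x) (F ω)) A ∂P := by
          simp_rw [Measure.map_apply (measurable_add_const x) hA]
      _ = ∫⁻ μ, μ A ∂(Measure.map (fun ω => Measure.map (fun y => y + x) (F ω)) P) :=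
          (lintegral_map (Measure.measurable_coe hA) hmap).symm
      _ = ∫⁻ μ, μ A ∂(Measure.map F P) := by rw [hinv x]
      _ = ∫⁻ ω, F ω A ∂P := lintegral_map (Measure.measurable_coe hA) hFmeas
  -- Step 2: for each `ω`, averaging `F ω ((·+x)⁻¹' A)` over `x` gives `volume A`.
  have haverage : ∀ ω, ∫⁻ x : AddCircle p, F ω ((fun y => y + x) ⁻¹' A) ∂volume
      = volume A := by
    intro ω
    haveI := hFprob ω
    have hadd : Measurable fun q : AddCircle p × AddCircle p => q.2 + q.1 :=
      measurable_snd.add measurable_fst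
    have h1 : ∀ x : AddCircle p, F ω ((fun y => y + x) ⁻¹' A)
        = ∫⁻ y, A.indicator (1 : AddCircle p → ℝ≥0∞) (y + x) ∂(F ω) := by
      intro x
      rw [← lintegral_indicator_one (hA.preimage (measurable_add_const x))]
      congr 1
    simp_rw [h1]
    rw [lintegral_lintegral_swap]
    · have h2 : ∀ y : AddCircle p,
          ∫⁻ x : AddCircle p, A.indicator (1 : AddCircle p → ℝ≥0∞) (y + x) ∂volume
          = volume A := by
        intro y
        rw [lintegral_add_left_eq_self (A.indicator (1 : AddCircle p → ℝ≥0∞)) y,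
          lintegral_indicator_one hA]
      simp_rw [h2]
      simp [measure_univ]
    · exact ((measurable_one.indicator hA).comp hadd).aemeasurable
  -- Step 3: Fubini to compute the expectation.
  have hjoint : Measurable fun q : AddCircle p × Ω => F q.2 ((fun y => y + q.1) ⁻¹' A) := by
    set κ : ProbabilityTheory.Kernel (AddCircle p × Ω) (AddCircle p) :=
      ⟨fun q => F q.2, hFmeas.comp measurable_snd⟩ with hκ
    haveI : ProbabilityTheory.IsMarkovKernel κ := ⟨fun q => hFprob q.2⟩
    have htset : MeasurableSet {q : (AddCircle p × Ω) × AddCircle p | q.2 + q.1.1 ∈ A} :=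
      (measurable_snd.add measurable_fst.fst) hA
    have := ProbabilityTheory.Kernel.measurable_kernel_prodMk_left (κ := κ) htset
    convert this using 2 with q
    rfl

  have hexp : ENNReal.ofReal p * ∫⁻ ω, F ω A ∂P = volume A := by
    have hswap : ∫⁻ x : AddCircle p, ∫⁻ ω, F ω ((fun y => y + x) ⁻¹' A) ∂P ∂volume
        = ∫⁻ ω, ∫⁻ x : AddCircle p, F ω ((fun y => y + x) ⁻¹' A) ∂volume ∂P :=
      lintegral_lintegral_swap hjoint.aemeasurable
    simp_rw [hconst, haverage] at hswap
    rw [lintegral_const, lintegral_const, AddCircle.measure_univ, measure_univ,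
      mul_one, mul_comm] at hswap
    exact hswap
  have hI : ∫⁻ ω, F ω A ∂P = volume A / ENNReal.ofReal p :=
    (ENNReal.eq_div_iff hp0 ENNReal.ofReal_ne_top).mpr hexp
  -- Step 4: Markov's inequality.
  calc P {ω | ENNReal.ofReal t < F ω A}
      ≤ P {ω | ENNReal.ofReal t ≤ F ω A} :=
        measure_mono (setOf_subset_setOf.mpr fun ω h => h.le)
    _ ≤ (∫⁻ ω, F ω A ∂P) / ENNReal.ofReal t :=
        meas_ge_le_lintegral_div hmeasA.aemeasurable ht0 ENNReal.ofReal_ne_top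
    _ = volume A / (ENNReal.ofReal p * ENNReal.ofReal t) := by
        rw [hI, div_eq_mul_inv, div_eq_mul_inv, div_eq_mul_inv, mul_assoc,
          ← ENNReal.mul_inv (Or.inl hp0) (Or.inl ENNReal.ofReal_ne_top)]
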